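/- Let V be a Banach space, I^∞ = [-1,1]^ℕ, and let (g_s)_{s ∈ F} ⊂ W ⊆ V with (‖g_s‖_W)_{s ∈ F} ∈ ℓ_1(F), and (φ_s)_{s ∈ F} bounded functions on I^∞ with sup norm 1. Suppose operators (P_n) satisfy ‖v - P_n v‖_V ≤ C_D n^{-α} ‖v‖_W for all v ∈ W, and define δ_k as successive differences of P_{2^k}. If the series v(y) = Σ_{s ∈ F} g_s φ_s(y) converges unconditionally in L_∞(I^∞, V), then the double series Σ_{(k,s) ∈ ℤ₊ × F} δ_k(g_s) φ_s(y) converges unconditionally in L_∞(I^∞, V) to v. -/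

import Mathlib

/-- The parametric domain `I^∞ = [-1,1]^ℕ`. -/
def Cube : Type := {y : ℕ → ℝ // ∀ j, |y j| ≤ 1}

/-- Unconditional convergence of the series `Σ_i f_i` to `v` in the sup norm
(`L_∞(I^∞, V)`): for every `ε > 0` the partial sums over all large enough finite index
sets are uniformly within `ε` of `v`. -/
def UncondConv {ι Y V : Type*} [NormedAddCommGroup V] (f : ι → Y → V) (v : Y → V) : Prop :=
  ∀ ε : ℝ, 0 < ε → ∃ G₀ : Finset ι, ∀ G : Finset ι, G₀ ⊆ G →
    ∀ y : Y, ‖v y - ∑ i ∈ G, f i y‖ ≤ ε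
/-- If `‖H i y‖ ≤ c i` uniformly in `y`, `c` is summable and nonnegative, and for every `y`
the series `Σ_i H i y` sums to `0`, then the partial sums over large finite sets are
uniformly small. -/
lemma uncond_zero_aux {ι Y V : Type*} [NormedAddCommGroup V] [CompleteSpace V]
    (H : ι → Y → V) (c : ι → ℝ) (hc0 : ∀ i, 0 ≤ c i) (hc : Summable c)
    (hb : ∀ i y, ‖H i y‖ ≤ c i) (hsum : ∀ y, HasSum (fun i => H i y) 0)
    {ε : ℝ} (hε : 0 < ε) :
    ∃ H₀ : Finset ι, ∀ G : Finset ι, H₀ ⊆ G → ∀ y, ‖∑ i ∈ G, H i y‖ ≤ ε := by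
  obtain ⟨H₀, hH₀⟩ := Filter.eventually_atTop.mp (Metric.tendsto_nhds.mp hc.hasSum ε hε)
  refine ⟨H₀, fun G hG y => ?_⟩
  have hsN : Summable fun i => H i y := Summable.of_norm_bounded (g := c) hc fun i => hb i y
  have h0 : ∑' i, H i y = 0 := (hsum y).tsum_eq
  have hsplit := Summable.tsum_add_tsum_compl (s := (↑G : Set ι)) (hsN.subtype _) (hsN.subtype _)
  rw [h0, Finset.tsum_subtype' G (fun i => H i y)] at hsplit
  have heq : ∑ i ∈ G, H i y = -∑' i : (((↑G : Set ι)ᶜ : Set ι)), H i y :=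
    eq_neg_of_add_eq_zero_left hsplit
  rw [heq, norm_neg]
  have hb1 : ‖∑' i : (((↑G : Set ι)ᶜ : Set ι)), H i y‖ ≤ ∑' i : (((↑G : Set ι)ᶜ : Set ι)), c i :=
    tsum_of_norm_bounded (hc.subtype _).hasSum fun i => hb i y
  have hc2 := Summable.tsum_add_tsum_compl (s := (↑G : Set ι)) (hc.subtype _) (hc.subtype _)
  rw [Finset.tsum_subtype' G c] at hc2
  have hle : ∑ i ∈ G, c i ≤ ∑' i, c i := Summable.sum_le_tsum G (fun i _ => hc0 i) hc
  have hdist := hH₀ G hG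
  rw [Real.dist_eq] at hdist
  have := abs_lt.mp hdist
  linarith

theorem stmt6 {V : Type*} [NormedAddCommGroup V] [NormedSpace ℝ V] [CompleteSpace V]
    (W : Set V) (normW : V → ℝ)
    (P : ℕ → V →L[ℝ] V) (α C_D : ℝ) (hα : 0 < α) (hCD : 0 ≤ C_D)
    (happrox : ∀ v ∈ W, ∀ n : ℕ, 1 ≤ n → ‖v - P n v‖ ≤ C_D * (n : ℝ) ^ (-α) * normW v)
    (δ : ℕ → V → V)
    (hδ0 : ∀ v, δ 0 v = P 1 v)
    (hδ : ∀ k : ℕ, 1 ≤ k → ∀ v, δ k v = P (2 ^ k) v - P (2 ^ (k - 1)) v)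
    (g : (ℕ →₀ ℕ) → V) (hg : ∀ s, g s ∈ W)
    (hgsum : Summable fun s : ℕ →₀ ℕ => normW (g s))
    (φ : (ℕ →₀ ℕ) → Cube → ℝ) (hφ : ∀ s y, |φ s y| ≤ 1)
    (v : Cube → V)
    (hconv : UncondConv (fun (s : ℕ →₀ ℕ) (y : Cube) => φ s y • g s) v) :
    UncondConv (fun (q : ℕ × (ℕ →₀ ℕ)) (y : Cube) => φ q.2 y • δ q.1 (g q.2)) v := by
  -- basic constants
  set r := (2 : ℝ) ^ (-α) with hrdef
  have hr0 : 0 < r := Real.rpow_pos_of_pos (by norm_num) _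
  have hr1 : r < 1 := Real.rpow_lt_one_of_one_lt_of_neg (by norm_num) (by linarith)
  set a := fun (s : ℕ →₀ ℕ) => |normW (g s)| with hadef
  have ha0 : ∀ s, 0 ≤ a s := fun s => abs_nonneg _
  -- power identity
  have hpow : ∀ m : ℕ, (((2 : ℕ) ^ m : ℕ) : ℝ) ^ (-α) = r ^ m := by
    intro m
    push_cast
    rw [← Real.rpow_natCast (2 : ℝ) m, ← Real.rpow_natCast r m, hrdef,
      ← Real.rpow_mul (by norm_num), ← Real.rpow_mul (by norm_num), mul_comm]
  -- approximation bounds in terms of r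
  have happ : ∀ (s : ℕ →₀ ℕ) (m : ℕ), ‖g s - P (2 ^ m) (g s)‖ ≤ C_D * r ^ m * a s := by
    intro s m
    have h1 := happrox (g s) (hg s) (2 ^ m) (Nat.one_le_two_pow)
    rw [hpow m] at h1
    refine h1.trans ?_
    have : 0 ≤ C_D * r ^ m := mul_nonneg hCD (pow_nonneg hr0.le m)
    exact mul_le_mul_of_nonneg_left (le_abs_self _) this
  -- the correction term
  set E := fun (q : ℕ × (ℕ →₀ ℕ)) (y : Cube) =>
    φ q.2 y • δ q.1 (g q.2) - (if q.1 = 0 then φ q.2 y • g q.2 else 0) with hEdef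
  set c := fun (q : ℕ × (ℕ →₀ ℕ)) => (2 * C_D / r) * (r ^ q.1 * a q.2) with hcdef
  have hc0 : ∀ q, 0 ≤ c q := by
    intro q
    exact mul_nonneg (div_nonneg (by linarith) hr0.le)
      (mul_nonneg (pow_nonneg hr0.le _) (ha0 _))
  -- smul bound
  have hsmul : ∀ s y (w : V), ‖φ s y • w‖ ≤ ‖w‖ := by
    intro s y w
    rw [norm_smul, Real.norm_eq_abs]
    exact mul_le_of_le_one_left (norm_nonneg _) (hφ s y)
  -- norm bound on E
  have hb : ∀ q y, ‖E q y‖ ≤ c q := by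
    rintro ⟨k, s⟩ y
    rcases Nat.eq_zero_or_pos k with hk | hk
    · subst hk
      have hE : E (0, s) y = φ s y • (P 1 (g s) - g s) := by
        simp [hEdef, hδ0, smul_sub]
      rw [hE]
      have h1 : ‖P 1 (g s) - g s‖ ≤ C_D * a s := by
        rw [norm_sub_rev]
        have := happ s 0
        simpa using this
      refine (hsmul s y _).trans (h1.trans ?_)
      have hra : C_D * r ≤ 2 * C_D := by nlinarith
      rw [hcdef]
      simp only [pow_zero, one_mul]
      rw [div_mul_eq_mul_div, le_div_iff₀ hr0]
      nlinarith [ha0 s]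
    · have hk1 : 1 ≤ k := hk
      have hE : E (k, s) y = φ s y • (P (2 ^ k) (g s) - P (2 ^ (k - 1)) (g s)) := by
        have : ¬ (k = 0) := by omega
        simp [hEdef, this, hδ k hk1]
      rw [hE]
      have h1 : ‖P (2 ^ k) (g s) - P (2 ^ (k - 1)) (g s)‖
          ≤ ‖g s - P (2 ^ (k - 1)) (g s)‖ + ‖g s - P (2 ^ k) (g s)‖ := by
        have : P (2 ^ k) (g s) - P (2 ^ (k - 1)) (g s)
            = (g s - P (2 ^ (k - 1)) (g s)) - (g s - P (2 ^ k) (g s)) := by abel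
        rw [this]
        exact norm_sub_le _ _
      have h2 := happ s (k - 1)
      have h3 := happ s k
      refine (hsmul s y _).trans (h1.trans ?_)
      have hrk : r ^ k = r ^ (k - 1) * r := by
        rw [← pow_succ]
        congr 1
        omega
      have hrk1 : r ^ k ≤ r ^ (k - 1) := by
        rw [hrk]
        nlinarith [pow_nonneg hr0.le (k - 1)]
      rw [hcdef]
      have hgoal : C_D * r ^ (k - 1) * a s + C_D * r ^ k * a s
          ≤ 2 * C_D / r * (r ^ k * a s) := by
        rw [div_mul_eq_mul_div, le_div_iff₀ hr0, hrk]
        have ht : 0 ≤ C_D * r ^ (k - 1) * a s * r := by positivity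
        nlinarith [mul_nonneg ht (by linarith : (0:ℝ) ≤ 1 - r)]
      calc ‖g s - P (2 ^ (k - 1)) (g s)‖ + ‖g s - P (2 ^ k) (g s)‖
          ≤ C_D * r ^ (k - 1) * a s + C_D * r ^ k * a s := add_le_add h2 h3
        _ ≤ 2 * C_D / r * (r ^ k * a s) := hgoal
  -- summability of c
  have hgeom : Summable fun k : ℕ => r ^ k := summable_geometric_of_lt_one hr0.le hr1
  have hA : Summable a := hgsum.abs
  have hprod : Summable fun q : ℕ × (ℕ →₀ ℕ) => r ^ q.1 * a q.2 :=
    hgeom.mul_of_nonneg hA (fun k => pow_nonneg hr0.le k) ha0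
  have hc : Summable c := hprod.mul_left _
  -- telescoping
  have tele : ∀ (w : V) (K : ℕ), ∑ k ∈ Finset.range (K + 1), δ k w = P (2 ^ K) w := by
    intro w K
    induction K with
    | zero => simp [hδ0]
    | succ K ih =>
        rw [Finset.sum_range_succ, ih, hδ (K + 1) (by omega)]
        simp
  -- the inner sums vanish
  have inner0 : ∀ (s : ℕ →₀ ℕ) (y : Cube), ∑' k, E (k, s) y = 0 := by
    intro s y
    have hsk : Summable fun k => E (k, s) y := by
      refine Summable.of_norm_bounded (g := fun k => c (k, s)) ?_ (fun k => hb (k, s) y)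
      have : Summable fun k : ℕ => ((2 * C_D / r) * a s) * r ^ k := hgeom.mul_left _
      refine this.congr fun k => ?_
      rw [hcdef]; ring
    have h1 : Filter.Tendsto (fun n => ∑ k ∈ Finset.range n, E (k, s) y)
        Filter.atTop (nhds (∑' k, E (k, s) y)) := hsk.hasSum.tendsto_sum_nat
    have h2 : Filter.Tendsto (fun n => ∑ k ∈ Finset.range n, E (k, s) y)
        Filter.atTop (nhds 0) := by
      apply squeeze_zero_norm' (a := fun n => (C_D * a s) * r ^ (n - 1))
      · filter_upwards [Filter.eventually_ge_atTop 1] with n hn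
        obtain ⟨m, rfl⟩ : ∃ m, n = m + 1 := ⟨n - 1, by omega⟩
        have hsum : ∑ k ∈ Finset.range (m + 1), E (k, s) y
            = φ s y • (P (2 ^ m) (g s) - g s) := by
          have e1 : ∑ k ∈ Finset.range (m + 1), E (k, s) y
              = (∑ k ∈ Finset.range (m + 1), φ s y • δ k (g s))
                - ∑ k ∈ Finset.range (m + 1), (if k = 0 then φ s y • g s else 0) := by
            rw [← Finset.sum_sub_distrib]
          rw [e1, ← Finset.smul_sum, tele (g s) m, Finset.sum_ite_eq' (Finset.range (m + 1)) 0
            (fun _ => φ s y • g s)]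
          simp [smul_sub]
        rw [hsum]
        have := hsmul s y (P (2 ^ m) (g s) - g s)
        rw [norm_sub_rev] at this
        have h4 := happ s m
        simp only [Nat.add_sub_cancel]
        calc ‖φ s y • (P (2 ^ m) (g s) - g s)‖ ≤ ‖g s - P (2 ^ m) (g s)‖ := this
          _ ≤ C_D * r ^ m * a s := h4
          _ = C_D * a s * r ^ m := by ring
      · have : Filter.Tendsto (fun n : ℕ => r ^ (n - 1)) Filter.atTop (nhds 0) :=
          (tendsto_pow_atTop_nhds_zero_of_lt_one hr0.le hr1).comp (Filter.tendsto_sub_atTop_nat 1)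
        simpa using this.const_mul (C_D * a s)
    exact tendsto_nhds_unique h1 h2
  -- full HasSum to 0
  have hzero : ∀ y, HasSum (fun q => E q y) 0 := by
    intro y
    have hs : Summable fun q => E q y := Summable.of_norm_bounded (g := c) hc (fun q => hb q y)
    have ht : ∑' q, E q y = 0 := by
      have hswap : Summable fun p : (ℕ →₀ ℕ) × ℕ => E p.swap y := hs.prod_symm
      have hinner : ∀ s : ℕ →₀ ℕ, Summable fun k : ℕ => E (k, s) y := by
        intro s
        refine Summable.of_norm_bounded (g := fun k => c (k, s)) ?_ (fun k => hb (k, s) y)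
        have : Summable fun k : ℕ => ((2 * C_D / r) * a s) * r ^ k := hgeom.mul_left _
        refine this.congr fun k => ?_
        rw [hcdef]; ring
      have h1 : ∑' p : (ℕ →₀ ℕ) × ℕ, E p.swap y = ∑' q : ℕ × (ℕ →₀ ℕ), E q y :=
        (Equiv.prodComm (ℕ →₀ ℕ) ℕ).tsum_eq (fun q : ℕ × (ℕ →₀ ℕ) => E q y)
      rw [← h1, Summable.tsum_prod' hswap (fun s => hinner s)]
      calc (∑' (s : ℕ →₀ ℕ) (k : ℕ), E ((s, k) : (ℕ →₀ ℕ) × ℕ).swap y)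
          = ∑' (s : ℕ →₀ ℕ), (0 : V) := tsum_congr fun s => inner0 s y
        _ = 0 := tsum_zero
    exact ht ▸ hs.hasSum
  -- main argument
  intro ε hε
  obtain ⟨G₁, hG₁⟩ := hconv (ε / 2) (by linarith)
  obtain ⟨H₀, hH₀⟩ := uncond_zero_aux E c hc0 hc hb hzero (ε := ε / 2) (by linarith)
  refine ⟨({0} : Finset ℕ) ×ˢ G₁ ∪ H₀, fun G hG y => ?_⟩
  have hGH : H₀ ⊆ G := (Finset.union_subset_iff.mp hG).2
  set T := (G.filter fun (q : ℕ × (ℕ →₀ ℕ)) => q.1 = 0).image Prod.snd with hTdef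
  have hT : G₁ ⊆ T := by
    intro s hs
    have h0s : ((0 : ℕ), s) ∈ G := hG (Finset.mem_union_left _ (by
      simp [Finset.mem_product, hs]))
    rw [hTdef]
    exact Finset.mem_image.mpr ⟨(0, s), Finset.mem_filter.mpr ⟨h0s, rfl⟩, rfl⟩
  have hsplit : ∑ q ∈ G, φ q.2 y • δ q.1 (g q.2)
      = (∑ q ∈ G, E q y) + ∑ s ∈ T, φ s y • g s := by
    have e1 : ∑ q ∈ G, φ q.2 y • δ q.1 (g q.2)
        = (∑ q ∈ G, E q y) + ∑ q ∈ G, (if q.1 = 0 then φ q.2 y • g q.2 else 0) := by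
      rw [← Finset.sum_add_distrib]
      refine Finset.sum_congr rfl fun q _ => ?_
      rw [hEdef]
      exact (sub_add_cancel _ _).symm
    have e2 : ∑ q ∈ G, (if q.1 = 0 then φ q.2 y • g q.2 else 0)
        = ∑ q ∈ G.filter (fun q => q.1 = 0), φ q.2 y • g q.2 :=
      (Finset.sum_filter _ _).symm
    have e3 : ∑ s ∈ T, φ s y • g s = ∑ q ∈ G.filter (fun q => q.1 = 0), φ q.2 y • g q.2 := by
      rw [hTdef]
      refine Finset.sum_image ?_
      rintro ⟨k, s⟩ hks ⟨k', s'⟩ hks' h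
      have h1 : k = 0 := (Finset.mem_filter.mp hks).2
      have h2 : k' = 0 := (Finset.mem_filter.mp hks').2
      simp_all
    rw [e1, e2, e3]
  have key : v y - ∑ q ∈ G, φ q.2 y • δ q.1 (g q.2)
      = (v y - ∑ s ∈ T, φ s y • g s) - ∑ q ∈ G, E q y := by
    rw [hsplit]; abel
  rw [key]
  calc ‖(v y - ∑ s ∈ T, φ s y • g s) - ∑ q ∈ G, E q y‖
      ≤ ‖v y - ∑ s ∈ T, φ s y • g s‖ + ‖∑ q ∈ G, E q y‖ := norm_sub_le _ _
    _ ≤ ε / 2 + ε / 2 := add_le_add (hG₁ T hT y) (hH₀ G hGH y)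
    _ = ε := by ring
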